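/- Let w : ℤ → ℝ → ℝ be a family of differentiable functions satisfying for all n ∈ ℤ and t ∈ ℝ the equation ẇ_n = w_n² (w_{n+2} w_{n+1} − w_{n−1} w_{n−2}). Define u_n(t) = w_{n+2}(t) w_{n+1}(t) w_n(t). Then for all n ∈ ℤ and t ∈ ℝ, u̇_n = u_n (u_{n+2} + u_{n+1} − u_{n−1} − u_{n−2}), i.e., u solves the INB equation. -/

import Mathlib

/-- Equation `ẇₙ = wₙ²(w_{n+2} w_{n+1} − w_{n−1} w_{n−2})` is transformed into the
INB equation by `uₙ = w_{n+2} w_{n+1} wₙ`. -/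
theorem stmt_5 (w : ℤ → ℝ → ℝ)
    (hw : ∀ (n : ℤ) (t : ℝ), HasDerivAt (w n)
      ((w n t) ^ 2 * (w (n + 2) t * w (n + 1) t - w (n - 1) t * w (n - 2) t)) t)
    (u : ℤ → ℝ → ℝ)
    (hu : ∀ (n : ℤ) (t : ℝ), u n t = w (n + 2) t * w (n + 1) t * w n t) :
    ∀ (n : ℤ) (t : ℝ), HasDerivAt (u n)
      (u n t * (u (n + 2) t + u (n + 1) t - u (n - 1) t - u (n - 2) t)) t := by
  intro n t
  have hfun : u n = fun s => w (n + 2) s * w (n + 1) s * w n s := funext (hu n)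
  have h := ((hw (n + 2) t).mul (hw (n + 1) t)).mul (hw n t)
  rw [hfun]
  refine HasDerivAt.congr_deriv (by exact h) ?_
  simp only [hu, Pi.mul_apply]
  simp only [show n + 2 + 2 = n + 4 by ring, show n + 2 + 1 = n + 3 by ring,
    show n + 1 + 2 = n + 3 by ring, show n + 1 + 1 = n + 2 by ring,
    show n + 2 - 1 = n + 1 by ring, show n + 2 - 2 = n by ring,
    show n + 1 - 1 = n by ring, show n + 1 - 2 = n - 1 by ring,
    show n - 1 + 2 = n + 1 by ring, show n - 1 + 1 = n by ring,
    show n - 2 + 2 = n by ring, show n - 2 + 1 = n - 1 by ring]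
  ring
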